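/- Let X be a Tychonoff space. For every Z_B-ultrafilter U on X, the set {f ∈ B_1(X) : Z(f) ∈ U} is a maximal ideal of B_1(X); every maximal ideal of B_1(X) is of this form for some Z_B-ultrafilter U; and distinct Z_B-ultrafilters U ≠ V yield distinct maximal ideals {f : Z(f) ∈ U} ≠ {f : Z(f) ∈ V}. -/

import Mathlib

open Filter Topology

/-- The ring of Baire one (pointwise limits of sequences of continuous) real-valued
functions on a topological space, as a subring of `X → ℝ`. -/
def baireOne (X : Type*) [TopologicalSpace X] : Subring (X → ℝ) where
  carrier := {f | ∃ F : ℕ → C(X, ℝ), ∀ x, Tendsto (fun n => F n x) atTop (𝓝 (f x))}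
  zero_mem' := ⟨fun _ => 0, fun x => by simpa using tendsto_const_nhds⟩
  one_mem' := ⟨fun _ => 1, fun x => by simpa using tendsto_const_nhds⟩
  add_mem' := by
    rintro f g ⟨F, hF⟩ ⟨G, hG⟩
    exact ⟨fun n => F n + G n, fun x => by simpa using (hF x).add (hG x)⟩
  mul_mem' := by
    rintro f g ⟨F, hF⟩ ⟨G, hG⟩
    exact ⟨fun n => F n * G n, fun x => by simpa using (hF x).mul (hG x)⟩
  neg_mem' := by
    rintro f ⟨F, hF⟩
    exact ⟨fun n => -F n, fun x => by simpa using (hF x).neg⟩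
/-- The zero sets of Baire one functions. -/
def zSets (X : Type*) [TopologicalSpace X] : Set (Set X) :=
  {Z | ∃ f ∈ baireOne X, Z = {x | f x = 0}}

/-- A `Z_B`-filter on `X`. -/
def IsZBFilter {X : Type*} [TopologicalSpace X] (F : Set (Set X)) : Prop :=
  F.Nonempty ∧ F ⊆ zSets X ∧ ∅ ∉ F ∧ (∀ Z₁ ∈ F, ∀ Z₂ ∈ F, Z₁ ∩ Z₂ ∈ F) ∧
    ∀ Z ∈ F, ∀ Z' ∈ zSets X, Z ⊆ Z' → Z' ∈ F

/-- A `Z_B`-ultrafilter on `X`: a maximal `Z_B`-filter. -/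
def IsZBUltrafilter {X : Type*} [TopologicalSpace X] (F : Set (Set X)) : Prop :=
  IsZBFilter F ∧ ∀ G : Set (Set X), IsZBFilter G → F ⊆ G → F = G

/-- The set of `Z_B`-ultrafilters on `X`. -/
def ZBUltra (X : Type*) [TopologicalSpace X] : Type _ := {F : Set (Set X) // IsZBUltrafilter F}

/-- The Stone topology on the set of `Z_B`-ultrafilters, whose closed sets are generated
by the base `Z̄ = {U | Z ∈ U}`, `Z ∈ Z(B₁(X))`. -/
instance (X : Type*) [TopologicalSpace X] : TopologicalSpace (ZBUltra X) :=
  TopologicalSpace.generateFrom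
    {V : Set (ZBUltra X) | ∃ Z ∈ zSets X, V = {U | Z ∉ U.1}}

section helpers
variable {X : Type*} [TopologicalSpace X]

lemma baireOne_inv {h : X → ℝ} (hh : h ∈ baireOne X) (hne : ∀ x, h x ≠ 0) :
    (fun x => (h x)⁻¹) ∈ baireOne X := by
  obtain ⟨F, hF⟩ := hh
  refine ⟨fun n => ⟨fun x => F n x / max ((F n x) ^ 2) ((1 / (n + 1 : ℝ)) ^ 2), ?_⟩, ?_⟩
  · exact (F n).continuous.div (((F n).continuous.pow 2).max continuous_const)
      (fun x => ne_of_gt (lt_of_lt_of_le (by positivity) (le_max_right _ _)))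
  · intro x
    have h1 : Tendsto (fun n => F n x) atTop (𝓝 (h x)) := hF x
    have h2 : Tendsto (fun n : ℕ => ((1 : ℝ) / (n + 1)) ^ 2) atTop (𝓝 0) := by
      simpa using ((tendsto_one_div_add_atTop_nhds_zero_nat (𝕜 := ℝ)).pow 2)
    have h3 : Tendsto (fun n => max ((F n x) ^ 2) ((1 / (n + 1 : ℝ)) ^ 2)) atTop
        (𝓝 ((h x) ^ 2)) := by
      simpa [max_eq_left (sq_nonneg (h x))] using (h1.pow 2).max h2
    have h4 := h1.div h3 (pow_ne_zero 2 (hne x))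
    have : h x / (h x) ^ 2 = (h x)⁻¹ := by
      rw [pow_two, ← div_div, div_self (hne x), one_div]
    simpa [this, Pi.div_def] using h4

lemma isUnit_of_nonvanishing {f : ↥(baireOne X)} (h : ∀ x, (f : X → ℝ) x ≠ 0) : IsUnit f := by
  refine IsUnit.of_mul_eq_one (a := f) ⟨fun x => ((f : X → ℝ) x)⁻¹, baireOne_inv f.2 h⟩ ?_
  ext x
  exact mul_inv_cancel₀ (h x)

/-- zero set of a Baire one function (as subtype element) -/
def zset (f : ↥(baireOne X)) : Set X := {x | (f : X → ℝ) x = 0}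

lemma zset_mem_zSets (f : ↥(baireOne X)) : zset f ∈ zSets X := ⟨f, f.2, rfl⟩

lemma zset_sq_add (f g : ↥(baireOne X)) : zset (f * f + g * g) = zset f ∩ zset g := by
  ext x
  simp only [zset, Set.mem_setOf_eq, Set.mem_inter_iff, Subring.coe_add, Subring.coe_mul,
    Pi.add_apply, Pi.mul_apply]
  constructor
  · intro hx
    constructor <;> nlinarith [sq_nonneg ((f : X → ℝ) x), sq_nonneg ((g : X → ℝ) x)]
  · rintro ⟨h1, h2⟩
    simp [h1, h2]

lemma zset_mul (f g : ↥(baireOne X)) : zset (f * g) = zset f ∪ zset g := by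
  ext x
  simp only [zset, Set.mem_setOf_eq, Set.mem_union, Subring.coe_mul, Pi.mul_apply]
  exact mul_eq_zero

lemma zset_add_superset (f g : ↥(baireOne X)) : zset f ∩ zset g ⊆ zset (f + g) := by
  rintro x ⟨h1, h2⟩
  simp only [zset, Set.mem_setOf_eq] at *
  simp [Subring.coe_add, h1, h2]

lemma zSets_inter {Z₁ Z₂ : Set X} (h1 : Z₁ ∈ zSets X) (h2 : Z₂ ∈ zSets X) :
    Z₁ ∩ Z₂ ∈ zSets X := by
  obtain ⟨f, hf, rfl⟩ := h1
  obtain ⟨g, hg, rfl⟩ := h2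
  have := zset_sq_add (X := X) ⟨f, hf⟩ ⟨g, hg⟩
  show zset (⟨f, hf⟩ : ↥(baireOne X)) ∩ zset (⟨g, hg⟩ : ↥(baireOne X)) ∈ zSets X
  rw [← this]
  exact zset_mem_zSets _

lemma univ_mem_of_filter {U : Set (Set X)} (hU : IsZBFilter U) : Set.univ ∈ U := by
  obtain ⟨Z, hZ⟩ := hU.1
  exact hU.2.2.2.2 Z hZ Set.univ ⟨0, zero_mem _, by ext x; simp⟩ (Set.subset_univ _)

/-- the ideal associated to a Z_B-filter -/
def MU (U : Set (Set X)) (hU : IsZBFilter U) : Ideal ↥(baireOne X) where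
  carrier := {f | zset f ∈ U}
  zero_mem' := by
    have : zset (0 : ↥(baireOne X)) = Set.univ := by ext x; simp [zset]
    simpa [Set.mem_setOf_eq, this] using univ_mem_of_filter hU
  add_mem' := by
    intro f g hf hg
    exact hU.2.2.2.2 _ (hU.2.2.2.1 _ hf _ hg) _ (zset_mem_zSets (f + g)) (zset_add_superset f g)
  smul_mem' := by
    intro r f hf
    have hsub : zset f ⊆ zset (r * f) := by
      intro x hx
      simp only [zset, Set.mem_setOf_eq] at *
      simp [Subring.coe_mul, hx]
    exact hU.2.2.2.2 _ hf _ (zset_mem_zSets (r * f)) (by simpa [smul_eq_mul] using hsub)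

lemma mem_MU {U : Set (Set X)} {hU : IsZBFilter U} {f : ↥(baireOne X)} :
    f ∈ MU U hU ↔ zset f ∈ U := Iff.rfl

lemma zset_one : zset (1 : ↥(baireOne X)) = ∅ := by
  ext x; simp [zset]

lemma MU_ne_top {U : Set (Set X)} (hU : IsZBFilter U) : MU U hU ≠ ⊤ := by
  intro h
  have : (1 : ↥(baireOne X)) ∈ MU U hU := h ▸ Submodule.mem_top
  rw [mem_MU, zset_one] at this
  exact hU.2.2.1 this

lemma mem_of_meets {U : Set (Set X)} (hU : IsZBUltrafilter U) {Z' : Set X}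
    (hZ' : Z' ∈ zSets X) (hmeet : ∀ Z ∈ U, (Z ∩ Z').Nonempty) : Z' ∈ U := by
  set G : Set (Set X) := {W | W ∈ zSets X ∧ ∃ Z ∈ U, Z ∩ Z' ⊆ W} with hGdef
  obtain ⟨Z₀, hZ₀⟩ := hU.1.1
  have hZ'G : Z' ∈ G := ⟨hZ', Z₀, hZ₀, Set.inter_subset_right⟩
  have hGf : IsZBFilter G := by
    refine ⟨⟨Z', hZ'G⟩, fun W hW => hW.1, ?_, ?_, ?_⟩
    · rintro ⟨-, Z, hZ, hsub⟩
      exact (hmeet Z hZ).not_subset_empty hsub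
    · rintro W₁ ⟨hW₁z, Z₁, hZ₁, hs₁⟩ W₂ ⟨hW₂z, Z₂, hZ₂, hs₂⟩
      refine ⟨zSets_inter hW₁z hW₂z, Z₁ ∩ Z₂, hU.1.2.2.2.1 _ hZ₁ _ hZ₂, ?_⟩
      intro x hx
      exact ⟨hs₁ ⟨hx.1.1, hx.2⟩, hs₂ ⟨hx.1.2, hx.2⟩⟩
    · rintro W ⟨hWz, Z, hZ, hs⟩ W' hW'z hWW'
      exact ⟨hW'z, Z, hZ, hs.trans hWW'⟩
  have : U = G := hU.2 G hGf (fun Z hZ => ⟨hU.1.2.1 hZ, Z, hZ, Set.inter_subset_left⟩)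
  rw [this]
  exact hZ'G

end helpers

/-- For a Tychonoff space `X`: for each `Z_B`-ultrafilter `U` the set
`{f ∈ B₁(X) : Z(f) ∈ U}` is a maximal ideal of `B₁(X)`; every maximal ideal of `B₁(X)`
arises this way; and distinct `Z_B`-ultrafilters give distinct maximal ideals. -/
theorem maximalIdeals_correspond_to_zbUltrafilters
    (X : Type*) [TopologicalSpace X] [CompletelyRegularSpace X] [T2Space X] :
    (∀ U : Set (Set X), IsZBUltrafilter U →
        ∃ M : Ideal ↥(baireOne X), M.IsMaximal ∧
          (M : Set ↥(baireOne X)) = {f : ↥(baireOne X) | {x | (f : X → ℝ) x = 0} ∈ U}) ∧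
    (∀ M : Ideal ↥(baireOne X), M.IsMaximal →
        ∃ U : Set (Set X), IsZBUltrafilter U ∧
          (M : Set ↥(baireOne X)) = {f : ↥(baireOne X) | {x | (f : X → ℝ) x = 0} ∈ U}) ∧
    (∀ U V : Set (Set X), IsZBUltrafilter U → IsZBUltrafilter V → U ≠ V →
        {f : ↥(baireOne X) | {x | (f : X → ℝ) x = 0} ∈ U} ≠
          {f : ↥(baireOne X) | {x | (f : X → ℝ) x = 0} ∈ V}) := by
  refine ⟨?_, ?_, ?_⟩
  · -- Part 1
    intro U hU
    refine ⟨MU U hU.1, ?_, rfl⟩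
    rw [Ideal.isMaximal_iff]
    constructor
    · rw [mem_MU, zset_one]
      exact hU.1.2.2.1
    · intro J x hMJ hxM hxJ
      rw [mem_MU] at hxM
      have hex : ∃ Z ∈ U, ¬(Z ∩ zset x).Nonempty := by
        by_contra hcon
        push_neg at hcon
        exact hxM (mem_of_meets hU (zset_mem_zSets x) hcon)
      obtain ⟨Z, hZU, hdisj⟩ := hex
      obtain ⟨g, hg, hZeq⟩ := hU.1.2.1 hZU
      have hg'M : (⟨g, hg⟩ : ↥(baireOne X)) ∈ MU U hU.1 := by
        rw [mem_MU]
        have : zset (⟨g, hg⟩ : ↥(baireOne X)) = Z := hZeq.symm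
        rw [this]; exact hZU
      have hhJ : x * x + ⟨g, hg⟩ * ⟨g, hg⟩ ∈ J := J.add_mem (J.mul_mem_left x hxJ)
        (J.mul_mem_left _ (hMJ hg'M))
      have hnv : ∀ y, ((x * x + ⟨g, hg⟩ * ⟨g, hg⟩ : ↥(baireOne X)) : X → ℝ) y ≠ 0 := by
        intro y hy
        have hy' : y ∈ zset (x * x + (⟨g, hg⟩ : ↥(baireOne X)) * ⟨g, hg⟩) := hy
        rw [zset_sq_add] at hy'
        refine hdisj ⟨y, ?_, hy'.1⟩
        rw [hZeq]
        exact hy'.2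
      exact (Ideal.eq_top_iff_one J).mp (J.eq_top_of_isUnit_mem hhJ (isUnit_of_nonvanishing hnv))
  · -- Part 2
    intro M hM
    set U : Set (Set X) := {Z | ∃ f : ↥(baireOne X), f ∈ M ∧ Z = zset f} with hUdef
    have hmemU : ∀ f : ↥(baireOne X), f ∈ M → zset f ∈ U := fun f hf => ⟨f, hf, rfl⟩
    have hUf : IsZBFilter U := by
      refine ⟨⟨zset 0, hmemU 0 M.zero_mem⟩, ?_, ?_, ?_, ?_⟩
      · rintro Z ⟨f, hf, rfl⟩
        exact zset_mem_zSets f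
      · rintro ⟨f, hf, hfe⟩
        have hnv : ∀ y, (f : X → ℝ) y ≠ 0 := by
          intro y hy
          have : y ∈ zset f := hy
          rw [← hfe] at this
          exact this
        exact hM.ne_top (M.eq_top_of_isUnit_mem hf (isUnit_of_nonvanishing hnv))
      · rintro Z₁ ⟨f, hf, rfl⟩ Z₂ ⟨g, hg, rfl⟩
        exact ⟨f * f + g * g, M.add_mem (M.mul_mem_left f hf) (M.mul_mem_left g hg),
          (zset_sq_add f g).symm⟩
      · rintro Z ⟨f, hf, rfl⟩ Z' ⟨g, hg, rfl⟩ hsub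
        refine ⟨f * ⟨g, hg⟩, M.mul_mem_right _ hf, ?_⟩
        rw [zset_mul]
        exact (Set.union_eq_self_of_subset_left hsub).symm
    have hMle : M ≤ MU U hUf := fun f hf => hmemU f hf
    have hMeq : M = MU U hUf := hM.eq_of_le (MU_ne_top hUf) hMle
    have hultra : ∀ G : Set (Set X), IsZBFilter G → U ⊆ G → U = G := by
      intro G hG hUG
      refine Set.Subset.antisymm hUG ?_
      intro Z hZG
      obtain ⟨g, hg, rfl⟩ := hG.2.1 hZG
      have hMG : M ≤ MU G hG := fun f hf => hUG (hmemU f hf)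
      have hMeqG : M = MU G hG := hM.eq_of_le (MU_ne_top hG) hMG
      have hg'M : (⟨g, hg⟩ : ↥(baireOne X)) ∈ M := by
        rw [hMeqG]
        exact hZG
      exact hmemU _ hg'M
    exact ⟨U, ⟨hUf, hultra⟩, by rw [hMeq]; rfl⟩
  · -- Part 3
    intro U V hU hV hne hset
    apply hne
    have key : ∀ (A B : Set (Set X)), IsZBUltrafilter A →
        {f : ↥(baireOne X) | {x | (f : X → ℝ) x = 0} ∈ A} =
          {f : ↥(baireOne X) | {x | (f : X → ℝ) x = 0} ∈ B} → A ⊆ B := by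
      intro A B hA hAB Z hZ
      obtain ⟨g, hg, rfl⟩ := hA.1.2.1 hZ
      have : (⟨g, hg⟩ : ↥(baireOne X)) ∈ {f : ↥(baireOne X) | {x | (f : X → ℝ) x = 0} ∈ A} := hZ
      rw [hAB] at this
      exact this
    exact Set.Subset.antisymm (key U V hU hset) (key V U hV hset.symm)
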